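/- For complex s with 0 < Re(s) < 1, one may interchange summation and integration: ∫₀^∞ [Σ_{k=1}^∞ (1/k²) ∫₀¹ √u · sin(πk²x/(2u)) du] x^{s-1} dx = Σ_{k=1}^∞ (1/k²) ∫₀¹ √u [∫₀^∞ sin(πk²x/(2u)) x^{s-1} dx] du, where the outer integral on the left is understood as lim_{A→∞} ∫_{1/A}^A. -/

import Mathlib

open Complex Real Filter MeasureTheory intervalIntegral Set

-- continuity of x ↦ (x:ℂ)^(s-1) on positive reals
lemma cpow_contOn (s : ℂ) {t : Set ℝ} (ht : ∀ x ∈ t, (0:ℝ) < x) :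
    ContinuousOn (fun x : ℝ => (x : ℂ) ^ (s-1)) t := fun x hx =>
  (Complex.continuousAt_ofReal_cpow_const x (s-1) (Or.inr (ht x hx).ne')).continuousWithinAt

lemma integrand_intable (s : ℂ) (c : ℝ) {a b : ℝ} (ha : 0 < a) (hb : 0 < b) :
    IntervalIntegrable (fun x : ℝ => (Real.sin (c*x) : ℂ) * (x:ℂ)^(s-1)) volume a b := by
  apply ContinuousOn.intervalIntegrable
  apply ContinuousOn.mul
  · exact Continuous.continuousOn (by continuity)
  · exact cpow_contOn s (fun x hx => lt_of_lt_of_le (lt_min ha hb) (by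
      rcases Set.mem_uIcc.mp hx with h | h
      exacts [le_trans (min_le_left _ _) h.1, le_trans (min_le_right _ _) h.1]))

lemma key_bound (s : ℂ) (h0 : 0 < s.re) (h1 : s.re < 1) :
    ∃ K : ℝ, 0 ≤ K ∧ ∀ c : ℝ, 1 ≤ c → ∀ a b : ℝ, 0 < a → a ≤ 1 → 1 ≤ b →
      ‖∫ x in a..b, (Real.sin (c*x) : ℂ) * (x:ℂ)^(s-1)‖ ≤ K := by
  have hs1 : s - 1 ≠ 0 := by
    intro h; rw [sub_eq_zero] at h; rw [h, Complex.one_re] at h1; exact lt_irrefl _ h1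
  have hs2 : s - 2 ≠ -1 := by
    intro h; apply hs1; linear_combination h
  set σ := s.re with hσdef
  have hσ0 : (0:ℝ) < σ := h0
  have hσ1 : σ < 1 := h1
  have hσ1' : (0:ℝ) < 1 - σ := by linarith
  refine ⟨1/σ + (2 + ‖s-1‖/(1-σ)), by positivity, fun c hc a b ha ha1 hb => ?_⟩
  have hc0 : (0:ℝ) < c := lt_of_lt_of_le one_pos hc
  -- split
  have hsplit : (∫ x in a..b, (Real.sin (c*x) : ℂ) * (x:ℂ)^(s-1))
      = (∫ x in a..(1:ℝ), (Real.sin (c*x) : ℂ) * (x:ℂ)^(s-1))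
        + ∫ x in (1:ℝ)..b, (Real.sin (c*x) : ℂ) * (x:ℂ)^(s-1) :=
    (integral_add_adjacent_intervals (integrand_intable s c ha one_pos)
      (integrand_intable s c one_pos (lt_of_lt_of_le one_pos hb))).symm
  rw [hsplit]
  have norm_cpow : ∀ x : ℝ, 0 < x → ‖(x:ℂ)^(s-1)‖ = x ^ (σ - 1) := by
    intro x hx
    rw [Complex.norm_cpow_eq_rpow_re_of_pos hx]
    congr 1
  -- part 1
  have part1 : ‖∫ x in a..(1:ℝ), (Real.sin (c*x) : ℂ) * (x:ℂ)^(s-1)‖ ≤ 1/σ := by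
    have hbd : ∀ᵐ t ∂volume.restrict (Set.uIoc a 1),
        ‖(Real.sin (c*t) : ℂ) * (t:ℂ)^(s-1)‖ ≤ t ^ (σ - 1) := by
      rw [Set.uIoc_of_le ha1]
      filter_upwards [ae_restrict_mem measurableSet_Ioc] with t ht
      have ht0 : 0 < t := ha.trans_le ht.1.le
      rw [norm_mul, norm_cpow t ht0]
      calc ‖(Real.sin (c*t) : ℂ)‖ * t ^ (σ-1) ≤ 1 * t ^ (σ-1) := by
            apply mul_le_mul_of_nonneg_right _ (Real.rpow_nonneg ht0.le _)
            rw [Complex.norm_real]; exact Real.abs_sin_le_one _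
        _ = t ^ (σ-1) := one_mul _
    have hint : IntervalIntegrable (fun t : ℝ => t ^ (σ-1)) volume a 1 := by
      apply ContinuousOn.intervalIntegrable
      apply ContinuousOn.rpow_const continuousOn_id
      intro x hx
      rw [Set.uIcc_of_le ha1] at hx
      exact Or.inl (ha.trans_le hx.1).ne'
    refine (norm_integral_le_abs_of_norm_le hbd hint).trans ?_
    rw [integral_rpow (Or.inl (by linarith))]
    rw [sub_add_cancel, Real.one_rpow]
    have h2 : a ^ σ ≤ 1 := Real.rpow_le_one ha.le ha1 h0.le
    have h3 : 0 ≤ a ^ σ := Real.rpow_nonneg ha.le σ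
    rw [_root_.abs_of_nonneg (div_nonneg (by linarith) hσ0.le)]
    rw [div_le_div_iff₀ hσ0 hσ0]
    nlinarith
  -- part 2
  have hb0 : (0:ℝ) < b := lt_of_lt_of_le one_pos hb
  set U : ℝ → ℂ := fun x => (x:ℂ)^(s-1) with hU
  set U' : ℝ → ℂ := fun x => (s-1) * (x:ℂ)^(s-2) with hU'
  set V : ℝ → ℂ := fun x => ((-Real.cos (c*x))/c : ℝ) with hV
  have hUderiv : ∀ x ∈ Set.uIcc (1:ℝ) b, HasDerivAt U (U' x) x := by
    intro x hx
    rw [Set.uIcc_of_le hb] at hx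
    have hx0 : (0:ℝ) < x := lt_of_lt_of_le one_pos hx.1
    have h := (hasDerivAt_ofReal_cpow_const' hx0.ne' hs2).const_mul (s-1)
    have he : s - 2 + 1 = s - 1 := by ring
    rw [he] at h
    have hfun : (fun y : ℝ => (s-1) * ((y:ℂ)^(s-1)/(s-1))) = U := by
      funext y; rw [hU]; field_simp
    rw [hfun] at h
    exact h
  have hVderiv : ∀ x ∈ Set.uIcc (1:ℝ) b, HasDerivAt V ((Real.sin (c*x) : ℂ)) x := by
    intro x hx
    have h1r : HasDerivAt (fun y : ℝ => c * y) c x := by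
      simpa using (hasDerivAt_id x).const_mul c
    have h2r : HasDerivAt (fun y : ℝ => Real.cos (c*y)) (-Real.sin (c*x) * c) x :=
      (Real.hasDerivAt_cos (c*x)).comp x h1r
    have h3r : HasDerivAt (fun y : ℝ => (-Real.cos (c*y))/c) (Real.sin (c*x)) x := by
      have h4 : HasDerivAt (fun y : ℝ => (-Real.cos (c*y))/c) (-(-Real.sin (c*x) * c) / c) x :=
        h2r.neg.div_const c
      convert h4 using 1
      rw [neg_mul, neg_neg, mul_div_cancel_right₀ _ hc0.ne']
    exact h3r.ofReal_comp
  have hU'int : IntervalIntegrable U' volume 1 b := by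
    apply ContinuousOn.intervalIntegrable
    refine ContinuousOn.mul continuousOn_const ?_
    intro x hx
    rw [Set.uIcc_of_le hb] at hx
    exact (Complex.continuousAt_ofReal_cpow_const x (s-2)
      (Or.inr (lt_of_lt_of_le one_pos hx.1).ne')).continuousWithinAt
  have hV'int : IntervalIntegrable (fun x => (Real.sin (c*x) : ℂ)) volume 1 b :=
    ContinuousOn.intervalIntegrable (Continuous.continuousOn (by continuity))
  have hparts := integral_mul_deriv_eq_deriv_mul hUderiv hVderiv hU'int hV'int
  have hcomm : (∫ x in (1:ℝ)..b, (Real.sin (c*x) : ℂ) * (x:ℂ)^(s-1))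
      = ∫ x in (1:ℝ)..b, U x * (Real.sin (c*x) : ℂ) := by
    apply integral_congr
    intro x _
    rw [hU]; ring
  -- bounds
  have hVbd : ∀ x : ℝ, ‖V x‖ ≤ 1 := by
    intro x
    rw [hV, Complex.norm_real, Real.norm_eq_abs, abs_div, abs_neg, abs_of_pos hc0,
      div_le_one hc0]
    exact le_trans (Real.abs_cos_le_one _) hc
  have part2 : ‖∫ x in (1:ℝ)..b, (Real.sin (c*x) : ℂ) * (x:ℂ)^(s-1)‖ ≤ 2 + ‖s-1‖/(1-σ) := by
    rw [hcomm, hparts]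
    have hUb : ‖U b‖ ≤ 1 := by
      rw [hU, norm_cpow b hb0]
      exact Real.rpow_le_one_of_one_le_of_nonpos hb (by linarith)
    have hU1 : ‖U 1‖ ≤ 1 := by
      rw [hU]; norm_num
    have htail : ‖∫ x in (1:ℝ)..b, U' x * V x‖ ≤ ‖s-1‖/(1-σ) := by
      have hbd : ∀ᵐ t ∂volume.restrict (Set.uIoc 1 b),
          ‖U' t * V t‖ ≤ ‖s-1‖ * t ^ (σ - 2) := by
        rw [Set.uIoc_of_le hb]
        filter_upwards [ae_restrict_mem measurableSet_Ioc] with t ht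
        have ht0 : 0 < t := lt_of_lt_of_le one_pos ht.1.le
        rw [norm_mul]
        have h1' : ‖U' t‖ = ‖s-1‖ * t ^ (σ-2) := by
          rw [hU', norm_mul, Complex.norm_cpow_eq_rpow_re_of_pos ht0]
          congr 2
        rw [h1']
        calc ‖s-1‖ * t ^ (σ-2) * ‖V t‖ ≤ ‖s-1‖ * t ^ (σ-2) * 1 := by
              apply mul_le_mul_of_nonneg_left (hVbd t) (by positivity)
          _ = ‖s-1‖ * t ^ (σ-2) := mul_one _
      have hint2 : IntervalIntegrable (fun t : ℝ => ‖s-1‖ * t ^ (σ-2)) volume 1 b := by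
        apply ContinuousOn.intervalIntegrable
        refine ContinuousOn.mul continuousOn_const ?_
        apply ContinuousOn.rpow_const continuousOn_id
        intro x hx
        rw [Set.uIcc_of_le hb] at hx
        exact Or.inl (lt_of_lt_of_le one_pos hx.1).ne'
      refine (norm_integral_le_abs_of_norm_le hbd hint2).trans ?_
      rw [intervalIntegral.integral_const_mul]
      rw [integral_rpow (Or.inr ⟨by intro h; rw [hσdef] at h; linarith, by
        rw [Set.uIcc_of_le hb]; intro h; exact absurd h.1 (by norm_num)⟩)]
      have hexp : σ - 2 + 1 = σ - 1 := by ring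
      rw [hexp, Real.one_rpow]
      have hble : b ^ (σ-1) ≤ 1 := Real.rpow_le_one_of_one_le_of_nonpos hb (by linarith)
      have hbge : 0 ≤ b ^ (σ-1) := Real.rpow_nonneg hb0.le _
      rw [abs_mul, abs_norm, abs_div]
      rw [abs_of_nonpos (by linarith : b ^ (σ-1) - 1 ≤ 0),
        abs_of_nonpos (by linarith : σ - 1 ≤ 0)]
      have harw : -(b ^ (σ-1) - 1) / -(σ-1) = (1 - b ^ (σ-1)) / (1-σ) := by ring_nf
      rw [harw]
      calc ‖s-1‖ * ((1 - b ^ (σ-1))/(1-σ)) ≤ ‖s-1‖ * (1/(1-σ)) := by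
            apply mul_le_mul_of_nonneg_left _ (norm_nonneg _)
            gcongr
            linarith
        _ = ‖s-1‖/(1-σ) := by rw [mul_one_div]
    calc ‖U b * V b - U 1 * V 1 - ∫ x in (1:ℝ)..b, U' x * V x‖
        ≤ ‖U b * V b - U 1 * V 1‖ + ‖∫ x in (1:ℝ)..b, U' x * V x‖ := norm_sub_le _ _
      _ ≤ ‖U b * V b‖ + ‖U 1 * V 1‖ + ‖∫ x in (1:ℝ)..b, U' x * V x‖ := by
          have := norm_sub_le (U b * V b) (U 1 * V 1); linarith
      _ ≤ 2 + ‖s-1‖/(1-σ) := by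
          have e1 : ‖U b * V b‖ ≤ 1 := by
            rw [norm_mul]
            nlinarith [norm_nonneg (U b), norm_nonneg (V b), hVbd b]
          have e2 : ‖U 1 * V 1‖ ≤ 1 := by
            rw [norm_mul]
            nlinarith [norm_nonneg (U 1), norm_nonneg (V 1), hVbd 1]
          linarith
  calc ‖_ + _‖ ≤ _ + _ := norm_add_le _ _
    _ ≤ 1/σ + (2 + ‖s-1‖/(1-σ)) := add_le_add part1 part2

lemma norm_cpow' (s : ℂ) {x : ℝ} (hx : 0 < x) : ‖(x:ℂ)^(s-1)‖ = x ^ (s.re - 1) := by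
  rw [Complex.norm_cpow_eq_rpow_re_of_pos hx]
  congr 1

lemma acont (k : ℕ+) : Continuous fun x : ℝ =>
    ∫ u in (0:ℝ)..1, Real.sqrt u * Real.sin (Real.pi * (k:ℝ)^2 * x / (2*u)) := by
  apply intervalIntegral.continuous_of_dominated_interval (bound := fun _ => 1)
  · intro x
    apply ContinuousOn.aestronglyMeasurable ?_ measurableSet_uIoc
    apply ContinuousOn.mul (Real.continuous_sqrt.continuousOn)
    apply Real.continuous_sin.comp_continuousOn
    apply ContinuousOn.div continuousOn_const (by fun_prop)
    intro u hu
    rw [Set.uIoc_of_le zero_le_one] at hu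
    exact (mul_pos two_pos hu.1).ne'
  · intro x
    filter_upwards with u hu
    rw [Set.uIoc_of_le zero_le_one] at hu
    rw [norm_mul, Real.norm_eq_abs, Real.norm_eq_abs,
      _root_.abs_of_nonneg (Real.sqrt_nonneg u)]
    calc Real.sqrt u * |Real.sin _| ≤ 1 * 1 := by
          apply mul_le_mul _ (Real.abs_sin_le_one _) (abs_nonneg _) zero_le_one
          rw [show (1:ℝ) = Real.sqrt 1 by simp]
          exact Real.sqrt_le_sqrt hu.2
      _ = 1 := one_mul 1
  · exact intervalIntegrable_const
  · filter_upwards with u _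
    fun_prop

lemma Fcont (s : ℂ) (h1 : s.re < 1) {A : ℝ} (hA : 2 ≤ A) (k : ℕ+) {u₀ : ℝ} (hu₀ : 0 < u₀) :
    ContinuousAt (fun u : ℝ => ∫ x in (1/A)..A,
      ((Real.sin (Real.pi * (k:ℝ)^2 * x / (2*u)) : ℝ) : ℂ) * (x:ℂ)^(s-1)) u₀ := by
  have hA0 : (0:ℝ) < A := by linarith
  have hIoc : Set.uIoc (1/A) A = Set.Ioc (1/A) A := Set.uIoc_of_le (by
    rw [div_le_iff₀ hA0]; nlinarith)
  have hpos : ∀ x ∈ Set.uIoc (1/A) A, (0:ℝ) < x := by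
    intro x hx
    rw [hIoc] at hx
    exact lt_trans (by positivity) hx.1
  apply intervalIntegral.continuousAt_of_dominated_interval
    (bound := fun x => x ^ (s.re - 1))
  · filter_upwards with u
    apply ContinuousOn.aestronglyMeasurable ?_ measurableSet_uIoc
    apply ContinuousOn.mul
    · exact (Complex.continuous_ofReal.comp (Real.continuous_sin.comp
        (by fun_prop))).continuousOn
    · exact cpow_contOn s hpos
  · filter_upwards with u
    filter_upwards with x hx
    rw [norm_mul, norm_cpow' s (hpos x hx), Complex.norm_real, Real.norm_eq_abs]
    calc |Real.sin _| * x ^ (s.re-1) ≤ 1 * x ^ (s.re-1) :=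
          mul_le_mul_of_nonneg_right (Real.abs_sin_le_one _)
            (Real.rpow_nonneg (hpos x hx).le _)
      _ = x ^ (s.re-1) := one_mul _
  · apply ContinuousOn.intervalIntegrable
    apply ContinuousOn.rpow_const continuousOn_id
    intro x hx
    left
    rw [Set.uIcc_of_le (by rw [div_le_iff₀ hA0]; nlinarith)] at hx
    exact (lt_of_lt_of_le (by positivity : (0:ℝ) < 1/A) hx.1).ne'
  · filter_upwards with x hx
    apply ContinuousAt.mul ?_ continuousAt_const
    apply Complex.continuous_ofReal.continuousAt.comp
    apply Real.continuous_sin.continuousAt.comp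
    apply ContinuousAt.div continuousAt_const (by fun_prop)
    exact (mul_pos two_pos hu₀).ne'

lemma fubini_step (s : ℂ) (h1 : s.re < 1) {A : ℝ} (hA : 2 ≤ A) (k : ℕ+) :
    (∫ x in (1/A)..A, ((∫ u in (0:ℝ)..1, Real.sqrt u *
        Real.sin (Real.pi * (k:ℝ)^2 * x / (2*u)) : ℝ) : ℂ) * (x:ℂ)^(s-1))
    = ∫ u in (0:ℝ)..1, (Real.sqrt u : ℂ) *
        ∫ x in (1/A)..A, ((Real.sin (Real.pi * (k:ℝ)^2 * x / (2*u)) : ℝ) : ℂ) * (x:ℂ)^(s-1) := by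
  have hA0 : (0:ℝ) < A := by linarith
  have ha0 : (0:ℝ) < 1/A := by positivity
  have hab : 1/A ≤ A := by rw [div_le_iff₀ hA0]; nlinarith
  set X := Set.Ioc (1/A) A with hX
  set U := Set.Ioc (0:ℝ) 1 with hU
  set f : ℝ → ℝ → ℂ := fun x u =>
    ((Real.sqrt u * Real.sin (Real.pi * (k:ℝ)^2 * x / (2*u)) : ℝ) : ℂ) * (x:ℂ)^(s-1) with hf
  -- integrability on the product
  have hfint : MeasureTheory.Integrable (Function.uncurry f)
      ((MeasureTheory.volume.restrict X).prod (MeasureTheory.volume.restrict U)) := by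
    rw [MeasureTheory.Measure.prod_restrict]
    have hmeas : MeasurableSet (X ×ˢ U) := measurableSet_Ioc.prod measurableSet_Ioc
    have hcont : ContinuousOn (Function.uncurry f) (X ×ˢ U) := by
      apply ContinuousOn.mul
      · apply Complex.continuous_ofReal.comp_continuousOn
        apply ContinuousOn.mul (by fun_prop)
        apply Real.continuous_sin.comp_continuousOn
        apply ContinuousOn.div (by fun_prop) (by fun_prop)
        intro p hp
        have : 0 < p.2 := hp.2.1
        exact (mul_pos two_pos this).ne'
      · intro p hp
        exact ((Complex.continuousAt_ofReal_cpow_const p.1 (s-1)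
          (Or.inr (lt_trans ha0 hp.1.1).ne')).comp
          continuous_fst.continuousAt).continuousWithinAt
    apply MeasureTheory.Integrable.mono'
      (g := fun _ => (1/A) ^ (s.re - 1))
      (MeasureTheory.integrableOn_const (hs := lt_top_iff_ne_top.mp ?_) (hC := enorm_ne_top))
      (hcont.aestronglyMeasurable hmeas)
    · filter_upwards [MeasureTheory.ae_restrict_mem hmeas] with p hp
      obtain ⟨x, u⟩ := p
      obtain ⟨hpx, hpu⟩ := hp
      have hx0 : 0 < x := lt_trans ha0 hpx.1
      show ‖f x u‖ ≤ (1/A) ^ (s.re - 1)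
      rw [hf]
      rw [norm_mul, norm_cpow' s hx0, Complex.norm_real, Real.norm_eq_abs]
      have e1 : |Real.sqrt u * Real.sin (Real.pi * (k:ℝ)^2 * x / (2*u))| ≤ 1 := by
        rw [abs_mul]
        calc |Real.sqrt u| * |Real.sin _| ≤ 1 * 1 := by
              apply mul_le_mul _ (Real.abs_sin_le_one _) (abs_nonneg _) zero_le_one
              rw [_root_.abs_of_nonneg (Real.sqrt_nonneg _),
                show (1:ℝ) = Real.sqrt 1 by simp]
              exact Real.sqrt_le_sqrt hpu.2
          _ = 1 := one_mul 1
      have e2 : x ^ (s.re - 1) ≤ (1/A) ^ (s.re - 1) :=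
        Real.rpow_le_rpow_of_nonpos ha0 hpx.1.le (by linarith)
      calc |Real.sqrt u * Real.sin _| * x ^ (s.re - 1)
          ≤ 1 * ((1/A) ^ (s.re - 1)) :=
            mul_le_mul e1 e2 (Real.rpow_nonneg hx0.le _) zero_le_one
        _ = (1/A) ^ (s.re - 1) := one_mul _
    · rw [MeasureTheory.Measure.prod_prod]
      exact ENNReal.mul_lt_top (measure_Ioc_lt_top) (measure_Ioc_lt_top)
  -- the actual swap
  have lhs_eq : (∫ x in (1/A)..A, ((∫ u in (0:ℝ)..1, Real.sqrt u *
        Real.sin (Real.pi * (k:ℝ)^2 * x / (2*u)) : ℝ) : ℂ) * (x:ℂ)^(s-1))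
      = ∫ x in X, ∫ u in U, f x u := by
    rw [intervalIntegral.integral_of_le hab]
    apply MeasureTheory.setIntegral_congr_fun measurableSet_Ioc
    intro x _
    beta_reduce
    rw [← intervalIntegral.integral_ofReal, intervalIntegral.integral_of_le zero_le_one,
      ← MeasureTheory.integral_mul_const]
  rw [lhs_eq, MeasureTheory.integral_integral_swap hfint]
  rw [intervalIntegral.integral_of_le zero_le_one]
  apply MeasureTheory.setIntegral_congr_fun measurableSet_Ioc
  intro u _
  beta_reduce
  rw [intervalIntegral.integral_of_le hab, ← MeasureTheory.integral_const_mul]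
  apply MeasureTheory.setIntegral_congr_fun measurableSet_Ioc
  intro x _
  show ((Real.sqrt u * Real.sin (Real.pi * (k:ℝ)^2 * x / (2*u)) : ℝ) : ℂ) * (x:ℂ)^(s-1) = _
  rw [Complex.ofReal_mul]
  ring

/-- For `0 < Re s < 1` one may interchange summation and integration:
`∫₀^∞ [Σ_k (1/k²) ∫₀¹ √u sin(πk²x/(2u)) du] x^(s-1) dx
  = Σ_k (1/k²) ∫₀¹ √u [∫₀^∞ sin(πk²x/(2u)) x^(s-1) dx] du`,
where the outer integral on the left is `lim_{A→∞} ∫_{1/A}^A` and `I k u` denotes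
the (convergent) inner improper integral. -/
theorem interchange_sum_integral (s : ℂ) (h0 : 0 < s.re) (h1 : s.re < 1)
    (I : ℕ+ → ℝ → ℂ)
    (hI : ∀ (k : ℕ+) (u : ℝ), 0 < u →
      Tendsto (fun A : ℝ => ∫ x in (1 / A)..A,
          Complex.sin ((Real.pi * (k : ℝ) ^ 2 * x / (2 * u) : ℝ) : ℂ) *
            (x : ℂ) ^ (s - 1)) atTop (nhds (I k u))) :
    Tendsto (fun A : ℝ => ∫ x in (1 / A)..A,
        ((∑' k : ℕ+, (1 / (k : ℝ) ^ 2) *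
          ∫ u in (0:ℝ)..1, Real.sqrt u *
            Real.sin (Real.pi * (k : ℝ) ^ 2 * x / (2 * u)) : ℝ) : ℂ) *
          (x : ℂ) ^ (s - 1)) atTop
      (nhds (∑' k : ℕ+, (1 / (k : ℂ) ^ 2) *
        ∫ u in (0:ℝ)..1, (Real.sqrt u : ℂ) * I k u)) := by
  obtain ⟨K, hK0, hK⟩ := key_bound s h0 h1
  set F : ℝ → ℕ+ → ℝ → ℂ := fun A k u => ∫ x in (1/A)..A,
    ((Real.sin (Real.pi * (k:ℝ)^2 * x / (2*u)) : ℝ) : ℂ) * (x:ℂ)^(s-1) with hF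
  have hk1 : ∀ k : ℕ+, (1:ℝ) ≤ (k:ℝ)^2 := by
    intro k
    have : (1:ℝ) ≤ (k:ℝ) := by exact_mod_cast k.one_le
    nlinarith
  have hπ := Real.pi_gt_three
  -- the rearrangement of the sine argument
  have hsin : ∀ (k : ℕ+) (u x : ℝ),
      Real.pi * (k:ℝ)^2 * x / (2*u) = Real.pi * (k:ℝ)^2 / (2*u) * x := by
    intro k u x; ring
  -- c ≥ 1
  have hc1 : ∀ (k : ℕ+) (u : ℝ), 0 < u → u ≤ 1 → 1 ≤ Real.pi * (k:ℝ)^2 / (2*u) := by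
    intro k u hu hu1
    rw [le_div_iff₀ (by positivity)]
    nlinarith [hk1 k]
  -- uniform bound on F
  have hFbd : ∀ (A : ℝ), 2 ≤ A → ∀ (k : ℕ+) (u : ℝ), 0 < u → u ≤ 1 →
      ‖F A k u‖ ≤ K := by
    intro A hA k u hu hu1
    have hA0 : (0:ℝ) < A := by linarith
    have : F A k u = ∫ x in (1/A)..A,
        ((Real.sin (Real.pi * (k:ℝ)^2 / (2*u) * x) : ℝ) : ℂ) * (x:ℂ)^(s-1) := by
      rw [hF]
      apply intervalIntegral.integral_congr
      intro x _
      simp only [hsin k u]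
    rw [this]
    exact hK _ (hc1 k u hu hu1) (1/A) A (by positivity)
      (by rw [div_le_one hA0]; linarith) (by linarith)
  -- convergence of F to I
  have hFI : ∀ (k : ℕ+) (u : ℝ), 0 < u →
      Tendsto (fun A => F A k u) atTop (nhds (I k u)) := by
    intro k u hu
    have := hI k u hu
    apply this.congr
    intro A
    rw [hF]
    apply intervalIntegral.integral_congr
    intro x _
    simp only [Complex.ofReal_sin]
  -- summability
  have hsum : Summable (fun k : ℕ+ => 1/((k:ℕ):ℝ)^2) := by
    have h : Summable (fun n : ℕ => 1/((n:ℝ))^2) := by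
      simpa using Real.summable_one_div_nat_pow.mpr one_lt_two
    exact h.comp_injective PNat.coe_injective
  -- MAIN: equality for A ≥ 2
  have heq : ∀ᶠ A in (atTop : Filter ℝ), (∫ x in (1 / A)..A,
        ((∑' k : ℕ+, (1 / (k : ℝ) ^ 2) *
          ∫ u in (0:ℝ)..1, Real.sqrt u *
            Real.sin (Real.pi * (k : ℝ) ^ 2 * x / (2 * u)) : ℝ) : ℂ) *
          (x : ℂ) ^ (s - 1))
      = ∑' k : ℕ+, (1/(k:ℂ)^2) * ∫ u in (0:ℝ)..1, (Real.sqrt u : ℂ) * F A k u := by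
    filter_upwards [eventually_ge_atTop (2:ℝ)] with A hA
    have hA0 : (0:ℝ) < A := by linarith
    have ha0 : (0:ℝ) < 1/A := by positivity
    have hab : 1/A ≤ A := by rw [div_le_iff₀ hA0]; nlinarith
    set a : ℕ+ → ℝ → ℝ := fun k x => ∫ u in (0:ℝ)..1, Real.sqrt u *
      Real.sin (Real.pi * (k:ℝ)^2 * x/(2*u)) with ha
    have habd : ∀ (k : ℕ+) (x : ℝ), |a k x| ≤ 1 := by
      intro k x
      rw [ha, ← Real.norm_eq_abs]
      refine le_trans (intervalIntegral.norm_integral_le_of_norm_le_const (C := 1) ?_)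
        (by norm_num)
      intro u hu
      rw [Set.uIoc_of_le zero_le_one] at hu
      rw [Real.norm_eq_abs, abs_mul]
      calc |Real.sqrt u| * |Real.sin _| ≤ 1 * 1 := by
            apply mul_le_mul _ (Real.abs_sin_le_one _) (abs_nonneg _) zero_le_one
            rw [_root_.abs_of_nonneg (Real.sqrt_nonneg _),
              show (1:ℝ) = Real.sqrt 1 by simp]
            exact Real.sqrt_le_sqrt hu.2
        _ = 1 := one_mul 1
    -- move the tsum out of the coercion and multiplication
    have e1 : Set.EqOn (fun x : ℝ => ((∑' k : ℕ+, (1 / (k : ℝ) ^ 2) *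
          ∫ u in (0:ℝ)..1, Real.sqrt u *
            Real.sin (Real.pi * (k : ℝ) ^ 2 * x / (2 * u)) : ℝ) : ℂ) * (x : ℂ) ^ (s - 1))
        (fun x : ℝ => ∑' k : ℕ+, ((1/((k:ℕ):ℝ)^2 * a k x : ℝ) : ℂ) * (x:ℂ)^(s-1))
        (Set.uIcc (1/A) A) := by
      intro x _
      beta_reduce
      rw [Complex.ofReal_tsum, ← tsum_mul_right]
    rw [intervalIntegral.integral_congr e1, intervalIntegral.integral_of_le hab]
    -- integrability of each term
    have hint : ∀ k : ℕ+, MeasureTheory.Integrable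
        (fun x : ℝ => ((1/((k:ℕ):ℝ)^2 * a k x : ℝ) : ℂ) * (x:ℂ)^(s-1))
        (MeasureTheory.volume.restrict (Set.Ioc (1/A) A)) := by
      intro k
      have hc : ContinuousOn
          (fun x : ℝ => ((1/((k:ℕ):ℝ)^2 * a k x : ℝ) : ℂ) * (x:ℂ)^(s-1))
          (Set.Icc (1/A) A) := by
        apply ContinuousOn.mul
        · exact (Complex.continuous_ofReal.comp
            (continuous_const.mul (acont k))).continuousOn
        · exact cpow_contOn s (fun x hx => lt_of_lt_of_le ha0 hx.1)
      exact (hc.integrableOn_Icc).mono_set Set.Ioc_subset_Icc_self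
    have hCi : MeasureTheory.IntegrableOn (fun x : ℝ => x ^ (s.re-1))
        (Set.Ioc (1/A) A) := by
      refine (ContinuousOn.integrableOn_Icc ?_).mono_set Set.Ioc_subset_Icc_self
      apply ContinuousOn.rpow_const continuousOn_id
      exact fun x hx => Or.inl (lt_of_lt_of_le ha0 hx.1).ne'
    set C := ∫ x in Set.Ioc (1/A) A, x ^ (s.re-1) with hC
    have hsn : Summable (fun k : ℕ+ => ∫ x in Set.Ioc (1/A) A,
        ‖((1/((k:ℕ):ℝ)^2 * a k x : ℝ) : ℂ) * (x:ℂ)^(s-1)‖) := by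
      apply Summable.of_nonneg_of_le
        (fun k => MeasureTheory.integral_nonneg (fun x => norm_nonneg _))
        (fun k => ?_) (hsum.mul_right C)
      calc (∫ x in Set.Ioc (1/A) A, ‖((1/((k:ℕ):ℝ)^2 * a k x : ℝ) : ℂ) * (x:ℂ)^(s-1)‖)
          ≤ ∫ x in Set.Ioc (1/A) A, (1/((k:ℕ):ℝ)^2) * x ^ (s.re-1) := by
            apply MeasureTheory.setIntegral_mono_on ((hint k).norm)
              (hCi.const_mul _) measurableSet_Ioc
            intro x hx
            have hx0 : 0 < x := lt_of_lt_of_le ha0 hx.1.le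
            rw [norm_mul, norm_cpow' s hx0, Complex.norm_real, Real.norm_eq_abs, abs_mul]
            apply mul_le_mul_of_nonneg_right _ (Real.rpow_nonneg hx0.le _)
            calc |1/((k:ℕ):ℝ)^2| * |a k x| ≤ |1/((k:ℕ):ℝ)^2| * 1 :=
                  mul_le_mul_of_nonneg_left (habd k x) (abs_nonneg _)
              _ = 1/((k:ℕ):ℝ)^2 := by rw [mul_one, _root_.abs_of_nonneg (by positivity)]
        _ = (1/((k:ℕ):ℝ)^2) * C := by rw [MeasureTheory.integral_const_mul]
    rw [← MeasureTheory.integral_tsum_of_summable_integral_norm hint hsn]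
    -- now identify each summand
    apply tsum_congr
    intro k
    rw [← intervalIntegral.integral_of_le hab]
    have e2 : Set.EqOn
        (fun x : ℝ => ((1/((k:ℕ):ℝ)^2 * a k x : ℝ) : ℂ) * (x:ℂ)^(s-1))
        (fun x : ℝ => ((1/((k:ℕ):ℝ)^2 : ℝ) : ℂ) * (((a k x : ℝ) : ℂ) * (x:ℂ)^(s-1)))
        (Set.uIcc (1/A) A) := by
      intro x _
      beta_reduce
      rw [Complex.ofReal_mul]
      ring
    rw [intervalIntegral.integral_congr e2, intervalIntegral.integral_const_mul]
    rw [ha]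
    rw [fubini_step s h1 hA k]
    rw [hF]
    norm_num
  -- MAIN: convergence of the sum
  have hconv : Tendsto (fun A : ℝ => ∑' k : ℕ+, (1/(k:ℂ)^2) *
      ∫ u in (0:ℝ)..1, (Real.sqrt u : ℂ) * F A k u) atTop
      (nhds (∑' k : ℕ+, (1 / (k : ℂ) ^ 2) *
        ∫ u in (0:ℝ)..1, (Real.sqrt u : ℂ) * I k u)) := by
    apply tendsto_tsum_of_dominated_convergence
      (bound := fun k : ℕ+ => 1/((k:ℕ):ℝ)^2 * (K * 1))
    · exact hsum.mul_right _
    · -- per-k convergence via DCT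
      intro k
      apply Tendsto.const_mul
      rw [intervalIntegral.integral_of_le zero_le_one]
      have : ∀ A : ℝ, (∫ u in (0:ℝ)..1, (Real.sqrt u : ℂ) * F A k u)
          = ∫ u in Set.Ioc (0:ℝ) 1, (Real.sqrt u : ℂ) * F A k u := by
        intro A
        rw [intervalIntegral.integral_of_le zero_le_one]
      simp only [this]
      apply MeasureTheory.tendsto_integral_filter_of_dominated_convergence
        (bound := fun _ => K)
      · -- measurability
        filter_upwards [eventually_ge_atTop (2:ℝ)] with A hA
        apply ContinuousOn.aestronglyMeasurable ?_ measurableSet_Ioc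
        intro u hu
        exact (Complex.continuous_ofReal.continuousAt.comp
          (Real.continuous_sqrt.continuousAt)).continuousWithinAt.mul
          (Fcont s h1 hA k hu.1).continuousWithinAt
      · -- bound
        filter_upwards [eventually_ge_atTop (2:ℝ)] with A hA
        filter_upwards [MeasureTheory.ae_restrict_mem measurableSet_Ioc] with u hu
        rw [norm_mul, Complex.norm_real, Real.norm_eq_abs,
          _root_.abs_of_nonneg (Real.sqrt_nonneg u)]
        calc Real.sqrt u * ‖F A k u‖ ≤ 1 * K := by
              apply mul_le_mul _ (hFbd A hA k u hu.1 hu.2) (norm_nonneg _) zero_le_one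
              rw [show (1:ℝ) = Real.sqrt 1 by simp]
              exact Real.sqrt_le_sqrt hu.2
          _ = K := one_mul K
      · exact MeasureTheory.integrable_const K
      · filter_upwards [MeasureTheory.ae_restrict_mem measurableSet_Ioc] with u hu
        exact (hFI k u hu.1).const_mul _
    · -- uniform bound on terms
      filter_upwards [eventually_ge_atTop (2:ℝ)] with A hA k
      rw [norm_mul]
      have e1 : ‖(1/(k:ℂ)^2 : ℂ)‖ = 1/((k:ℕ):ℝ)^2 := by
        rw [norm_div, norm_one, norm_pow, Complex.norm_natCast]
      rw [e1]
      apply mul_le_mul_of_nonneg_left _ (by positivity)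
      -- norm of interval integral ≤ K * 1
      refine le_trans (intervalIntegral.norm_integral_le_of_norm_le_const (C := K) ?_) (by norm_num)
      intro u hu
      rw [Set.uIoc_of_le zero_le_one] at hu
      rw [norm_mul, Complex.norm_real, Real.norm_eq_abs,
        _root_.abs_of_nonneg (Real.sqrt_nonneg u)]
      calc Real.sqrt u * ‖F A k u‖ ≤ 1 * K := by
            apply mul_le_mul _ (hFbd A hA k u hu.1 hu.2) (norm_nonneg _) zero_le_one
            rw [show (1:ℝ) = Real.sqrt 1 by simp]
            exact Real.sqrt_le_sqrt hu.2
        _ = K := one_mul K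
  exact Tendsto.congr' (heq.mono fun A h => h.symm) hconv
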